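/- Let n ≥ 3 and let θ̲ = min{v_m·Δt/Δx, 1−v_m·Δt/Δx, w·Δt/Δx, 1−w·Δt/Δx}. For any integer ι with 1 ≤ ι ≤ n−2 and any M_1,…,M_ι ∈ 𝒜_O, the 2×n matrix H_b·M_ιM_{ι−1}⋯M_1 has the following structure: there exist integers ι_1, ι_2 ≥ 1 with ι_1 ≤ ι+1, ι_2 ≤ ι+1 and ι_1 + ι_2 ≥ ι+2 such that the first row vanishes in columns ι_1+1,…,n and each of its entries in columns 1,…,ι_1 lies in the interval [θ̲^ι, 1], while the second row vanishes in columns 1,…,n−ι_2 and each of its entries in columns n−ι_2+1,…,n lies in the interval [θ̲^ι, 1]. -/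

import Mathlib

open Matrix Filter Finset

noncomputable section

/-- Loewner strict order `A < B`. -/
def loewnerLT {m : Type*} [Fintype m] (A B : Matrix m m ℝ) : Prop := (B - A).PosDef

/-- Loewner order `A ≤ B`. -/
def loewnerLE {m : Type*} [Fintype m] (A B : Matrix m m ℝ) : Prop := (B - A).PosSemidef

/-- smallest (real) eigenvalue of a matrix -/
def lamMin {N : ℕ} (M : Matrix (Fin N) (Fin N) ℝ) : ℝ :=
  sInf {t : ℝ | ∃ v : Fin N → ℝ, v ≠ 0 ∧ M.mulVec v = t • v}

/-- largest (real) eigenvalue of a matrix -/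
def lamMax {N : ℕ} (M : Matrix (Fin N) (Fin N) ℝ) : ℝ :=
  sSup {t : ℝ | ∃ v : Fin N → ℝ, v ≠ 0 ∧ M.mulVec v = t • v}

/-- spectral norm (ℓ²-operator norm) of a square matrix -/
def matSpectralNorm {N : ℕ} (M : Matrix (Fin N) (Fin N) ℝ) : ℝ :=
  ‖Matrix.toEuclideanCLM (𝕜 := ℝ) M‖

/-- largest singular value -/
def sigmaMax {N : ℕ} (M : Matrix (Fin N) (Fin N) ℝ) : ℝ := matSpectralNorm M

/-- maximum absolute row-sum matrix norm -/
def rowSumNorm {m n : ℕ} (M : Matrix (Fin m) (Fin n) ℝ) : ℝ :=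
  ⨆ i : Fin m, ∑ j, |M i j|

/-- Euclidean norm of a vector -/
def euclNorm {N : ℕ} (v : Fin N → ℝ) : ℝ := Real.sqrt (∑ j, (v j) ^ 2)

/-- the free-flow mode matrix A_FF -/
def matAFF (N : ℕ) (θv : ℝ) : Matrix (Fin N) (Fin N) ℝ :=
  Matrix.of fun i j =>
    if (i : ℕ) = 0 ∧ (j : ℕ) = 0 then 1
    else if i = j then 1 - θv
    else if (i : ℕ) = (j : ℕ) + 1 then θv
    else 0

/-- the congestion mode matrix A_CC -/
def matACC (N : ℕ) (θw : ℝ) : Matrix (Fin N) (Fin N) ℝ :=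
  Matrix.of fun i j =>
    if (i : ℕ) = N - 1 ∧ (j : ℕ) = N - 1 then 1
    else if i = j then 1 - θw
    else if (j : ℕ) = (i : ℕ) + 1 then θw
    else 0

/-- the congestion–freeflow mode matrix A_CF^s = diag(Δ_s, Θ_{N−s}) -/
def matACF (N s : ℕ) (θv θw : ℝ) : Matrix (Fin N) (Fin N) ℝ :=
  Matrix.of fun i j =>
    if (i : ℕ) < s ∧ (j : ℕ) < s then
      (if i = j then 1 - θw else if (j : ℕ) = (i : ℕ) + 1 then θw else 0)
    else if s ≤ (i : ℕ) ∧ s ≤ (j : ℕ) then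
      (if i = j then 1 - θv else if (i : ℕ) = (j : ℕ) + 1 then θv else 0)
    else 0

/-- set of observable-mode state transition matrices 𝒜_O -/
def setAO (N : ℕ) (θv θw : ℝ) : Set (Matrix (Fin N) (Fin N) ℝ) :=
  {matAFF N θv, matACC N θw} ∪ {M | ∃ s, 1 ≤ s ∧ s ≤ N - 1 ∧ M = matACF N s θv θw}

/-- boundary output matrix H_b, rows e_1ᵀ and e_nᵀ -/
def matHb (N : ℕ) : Matrix (Fin 2) (Fin N) ℝ :=
  Matrix.of fun i j =>
    if (i : ℕ) = 0 ∧ (j : ℕ) = 0 then 1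
    else if (i : ℕ) = 1 ∧ (j : ℕ) = N - 1 then 1
    else 0

/-- standing assumption on output matrices: pairwise distinct standard basis rows,
including e_1ᵀ and e_nᵀ -/
def standingH {mk N : ℕ} (H : Matrix (Fin mk) (Fin N) ℝ) : Prop :=
  (∀ p : Fin mk, ∃ l : Fin N, H p = fun j => if j = l then 1 else 0) ∧
  (∀ p q : Fin mk, H p = H q → p = q) ∧
  (∃ p : Fin mk, H p = fun j : Fin N => if (j : ℕ) = 0 then 1 else 0) ∧
  (∃ p : Fin mk, H p = fun j : Fin N => if (j : ℕ) = N - 1 then 1 else 0)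

/-- ascending product of inverses  M_lo⁻¹ · M_{lo+1}⁻¹ ⋯ M_hi⁻¹ -/
def prodInvAsc {N : ℕ} (M : ℕ → Matrix (Fin N) (Fin N) ℝ) (lo hi : ℕ) :
    Matrix (Fin N) (Fin N) ℝ :=
  ((List.range (hi + 1 - lo)).map (fun t => (M (lo + t))⁻¹)).prod

/-- descending product  M_hi · M_{hi−1} ⋯ M_lo -/
def prodDesc {N : ℕ} (M : ℕ → Matrix (Fin N) (Fin N) ℝ) (hi lo : ℕ) :
    Matrix (Fin N) (Fin N) ℝ :=
  ((List.range (hi + 1 - lo)).map (fun t => M (hi - t))).prod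

/-- a_𝓘 -/
def aI (N : ℕ) (θv θw r2 : ℝ) : ℝ :=
  r2⁻¹ * sInf {t : ℝ | ∃ M : ℕ → Matrix (Fin N) (Fin N) ℝ,
    (∀ ι, 1 ≤ ι → ι ≤ max 1 (N - 2) → M ι ∈ setAO N θv θw) ∧
    t = lamMin ((matHb N)ᵀ * matHb N +
      ∑ ι ∈ Finset.Icc 1 (max 1 (N - 2)),
        (prodInvAsc M ι (max 1 (N - 2)))ᵀ * (matHb N)ᵀ * matHb N *
          prodInvAsc M ι (max 1 (N - 2)))}

/-- b_𝓘 -/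
def bI (N : ℕ) (θv θw r1 : ℝ) : ℝ :=
  r1⁻¹ * sSup {t : ℝ | ∃ M : ℕ → Matrix (Fin N) (Fin N) ℝ,
    (∀ ι, 1 ≤ ι → ι ≤ max 1 (N - 2) → M ι ∈ setAO N θv θw) ∧
    t = lamMax (1 +
      ∑ ι ∈ Finset.Icc 1 (max 1 (N - 2)),
        (prodInvAsc M ι (max 1 (N - 2)))ᵀ * prodInvAsc M ι (max 1 (N - 2)))}

/-- a_𝓒 -/
def aC (N : ℕ) (θv θw q1 : ℝ) : ℝ :=
  q1 * sInf {t : ℝ | ∃ M : ℕ → Matrix (Fin N) (Fin N) ℝ,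
    (∀ ι, 1 ≤ ι → ι ≤ max 1 (N - 2) → M ι ∈ setAO N θv θw) ∧
    t = lamMin (1 +
      ∑ ι ∈ Finset.Icc 1 (max 1 (N - 2) - 1),
        prodDesc M (max 1 (N - 2) - 1) ι * (prodDesc M (max 1 (N - 2) - 1) ι)ᵀ)}

/-- b_𝓒 -/
def bC (N : ℕ) (θv θw q2 : ℝ) : ℝ :=
  q2 * sSup {t : ℝ | ∃ M : ℕ → Matrix (Fin N) (Fin N) ℝ,
    (∀ ι, 1 ≤ ι → ι ≤ max 1 (N - 2) → M ι ∈ setAO N θv θw) ∧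
    t = lamMax (1 +
      ∑ ι ∈ Finset.Icc 1 (max 1 (N - 2) - 1),
        prodDesc M (max 1 (N - 2) - 1) ι * (prodDesc M (max 1 (N - 2) - 1) ι)ᵀ)}

/-- constant c₁ -/
def cLow (N : ℕ) (θv θw q1 q2 r1 r2 : ℝ) : ℝ :=
  min (aI N θv θw r2) (aC N θv θw q1) /
    (1 + min (aI N θv θw r2) (aC N θv θw q1) * max (bI N θv θw r1) (bC N θv θw q2))

/-- constant c₂ -/
def cHigh (N : ℕ) (θv θw q1 q2 r1 r2 : ℝ) : ℝ :=
  (1 + min (aI N θv θw r2) (aC N θv θw q1) * max (bI N θv θw r1) (bC N θv θw q2)) /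
    min (aI N θv θw r2) (aC N θv θw q1)


/-- the product `M_b · M_{b−1} ⋯ M_1` (empty product = identity) -/
def prodSeq {N : ℕ} (M : ℕ → Matrix (Fin N) (Fin N) ℝ) : ℕ → Matrix (Fin N) (Fin N) ℝ
  | 0 => 1
  | b + 1 => M (b + 1) * prodSeq M b

/-- the stacked observability matrix with blocks `H_b, H_b M₁, H_b M₂M₁, …,
H_b M_T⋯M₁` -/
def stackObs (n T : ℕ) (M : ℕ → Matrix (Fin n) (Fin n) ℝ) :
    Matrix (Fin (2 * (T + 1))) (Fin n) ℝ :=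
  Matrix.of fun r c =>
    (matHb n * prodSeq M ((r : ℕ) / 2)) ⟨(r : ℕ) % 2, by omega⟩ c

namespace S19
open Matrix Finset

/-! ### Generic row-action machinery -/

def mulRow {n : ℕ} (u : Fin n → ℝ) (A : Matrix (Fin n) (Fin n) ℝ) (c : Fin n) : ℝ :=
  ∑ r, u r * A r c

lemma aux_sum_le_two {n : ℕ} (f : Fin n → ℝ) (a b : Fin n)
    (h0 : ∀ c, c ≠ a → c ≠ b → f c = 0) (h1 : f a ≤ 1) (h2 : a ≠ b → f a + f b ≤ 1) :
    ∑ c, f c ≤ 1 := by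
  classical
  have he : ∑ c, f c = ∑ c ∈ ({a, b} : Finset (Fin n)), f c := by
    refine (Finset.sum_subset (Finset.subset_univ _) ?_).symm
    intro c _ hc
    simp only [Finset.mem_insert, Finset.mem_singleton, not_or] at hc
    exact h0 c hc.1 hc.2
  rw [he]
  by_cases hab : a = b
  · subst hab; simp [h1]
  · rw [Finset.sum_pair hab]; exact h2 hab

lemma mulRow_nonneg {n : ℕ} (u : Fin n → ℝ) (A : Matrix (Fin n) (Fin n) ℝ)
    (hu : ∀ r, 0 ≤ u r) (hA : ∀ r c, 0 ≤ A r c) (c : Fin n) : 0 ≤ mulRow u A c :=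
  Finset.sum_nonneg fun r _ => mul_nonneg (hu r) (hA r c)

lemma mulRow_sum_le {n : ℕ} (u : Fin n → ℝ) (A : Matrix (Fin n) (Fin n) ℝ)
    (hu : ∀ r, 0 ≤ u r) (hus : ∑ r, u r ≤ 1)
    (hAs : ∀ r, ∑ c, A r c ≤ 1) : ∑ c, mulRow u A c ≤ 1 := by
  have h1 : ∑ c, mulRow u A c = ∑ r, u r * ∑ c, A r c := by
    unfold mulRow
    rw [Finset.sum_comm]
    exact Finset.sum_congr rfl fun r _ => (Finset.mul_sum _ _ _).symm
  rw [h1]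
  calc ∑ r, u r * ∑ c, A r c ≤ ∑ r, u r * 1 :=
        Finset.sum_le_sum fun r _ => mul_le_mul_of_nonneg_left (hAs r) (hu r)
    _ ≤ 1 := by simpa using hus

lemma mulRow_zero {n : ℕ} (u : Fin n → ℝ) (A : Matrix (Fin n) (Fin n) ℝ) (c : Fin n)
    (h : ∀ r, u r = 0 ∨ A r c = 0) : mulRow u A c = 0 :=
  Finset.sum_eq_zero fun r _ => by rcases h r with h | h <;> simp [h]

lemma mulRow_lb {n : ℕ} (θ δ : ℝ) (hθ0 : 0 ≤ θ) (u : Fin n → ℝ)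
    (A : Matrix (Fin n) (Fin n) ℝ) (hu : ∀ r, 0 ≤ u r) (hA : ∀ r c, 0 ≤ A r c)
    (c r0 : Fin n) (h1 : δ ≤ u r0) (h2 : θ ≤ A r0 c) : θ * δ ≤ mulRow u A c := by
  calc θ * δ = δ * θ := mul_comm _ _
    _ ≤ u r0 * A r0 c := mul_le_mul h1 h2 hθ0 (hu r0)
    _ ≤ mulRow u A c :=
        Finset.single_le_sum (f := fun r => u r * A r c)
          (fun r _ => mul_nonneg (hu r) (hA r c)) (Finset.mem_univ r0)

/-! ### Entry facts for the three matrix families -/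

section Facts
variable {n : ℕ} {θv θw : ℝ}

lemma AFF_nonneg (h0 : 0 ≤ θv) (h1 : θv ≤ 1) (r c : Fin n) : 0 ≤ matAFF n θv r c := by
  simp only [matAFF, Matrix.of_apply]; split_ifs <;> linarith

lemma ACC_nonneg (h0 : 0 ≤ θw) (h1 : θw ≤ 1) (r c : Fin n) : 0 ≤ matACC n θw r c := by
  simp only [matACC, Matrix.of_apply]; split_ifs <;> linarith

lemma ACF_nonneg {s : ℕ} (hv0 : 0 ≤ θv) (hv1 : θv ≤ 1) (hw0 : 0 ≤ θw) (hw1 : θw ≤ 1)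
    (r c : Fin n) : 0 ≤ matACF n s θv θw r c := by
  simp only [matACF, Matrix.of_apply]; split_ifs <;> linarith

lemma AFF_rowsum (h0 : 0 ≤ θv) (r : Fin n) : ∑ c, matAFF n θv r c ≤ 1 := by
  rcases Nat.eq_zero_or_pos (r : ℕ) with h | h
  · refine aux_sum_le_two _ r r ?_ ?_ (by simp)
    · intro c hc _
      have hc' : (c : ℕ) ≠ (r : ℕ) := fun he => hc (Fin.ext he)
      simp only [matAFF, Matrix.of_apply, Fin.ext_iff, Fin.val_mk]
      split_ifs <;> first | rfl | (exfalso; omega)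
    · have : matAFF n θv r r = 1 := by
        simp only [matAFF, Matrix.of_apply, Fin.ext_iff, Fin.val_mk]
        split_ifs <;> first | rfl | (exfalso; omega)
      rw [this]
  · have hrn : (r : ℕ) - 1 < n := by omega
    refine aux_sum_le_two _ r ⟨(r : ℕ) - 1, hrn⟩ ?_ ?_ ?_
    · intro c hc hc2
      have hc' : (c : ℕ) ≠ (r : ℕ) := fun he => hc (Fin.ext he)
      have hc2' : (c : ℕ) ≠ (r : ℕ) - 1 := fun he => hc2 (Fin.ext he)
      simp only [matAFF, Matrix.of_apply, Fin.ext_iff, Fin.val_mk]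
      split_ifs <;> first | rfl | (exfalso; omega)
    · have e1 : matAFF n θv r r = 1 - θv := by
        simp only [matAFF, Matrix.of_apply, Fin.ext_iff, Fin.val_mk]
        split_ifs <;> first | rfl | (exfalso; omega)
      rw [e1]; linarith
    · intro _
      have e1 : matAFF n θv r r = 1 - θv := by
        simp only [matAFF, Matrix.of_apply, Fin.ext_iff, Fin.val_mk]
        split_ifs <;> first | rfl | (exfalso; omega)
      have e2 : matAFF n θv r ⟨(r : ℕ) - 1, hrn⟩ = θv := by
        simp only [matAFF, Matrix.of_apply, Fin.ext_iff, Fin.val_mk]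
        split_ifs <;> first | rfl | (exfalso; omega)
      rw [e1, e2]; linarith

lemma ACC_rowsum (h0 : 0 ≤ θw) (r : Fin n) : ∑ c, matACC n θw r c ≤ 1 := by
  rcases eq_or_ne (r : ℕ) (n - 1) with h | h
  · refine aux_sum_le_two _ r r ?_ ?_ (by simp)
    · intro c hc _
      have hc' : (c : ℕ) ≠ (r : ℕ) := fun he => hc (Fin.ext he)
      simp only [matACC, Matrix.of_apply, Fin.ext_iff, Fin.val_mk]
      split_ifs <;> first | rfl | (exfalso; omega)
    · have : matACC n θw r r = 1 := by
        simp only [matACC, Matrix.of_apply, Fin.ext_iff, Fin.val_mk]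
        split_ifs <;> first | rfl | (exfalso; omega)
      rw [this]
  · have hrn : (r : ℕ) + 1 < n := by have := r.isLt; omega
    refine aux_sum_le_two _ r ⟨(r : ℕ) + 1, hrn⟩ ?_ ?_ ?_
    · intro c hc hc2
      have hc' : (c : ℕ) ≠ (r : ℕ) := fun he => hc (Fin.ext he)
      have hc2' : (c : ℕ) ≠ (r : ℕ) + 1 := fun he => hc2 (Fin.ext he)
      simp only [matACC, Matrix.of_apply, Fin.ext_iff, Fin.val_mk]
      split_ifs <;> first | rfl | (exfalso; omega)
    · have e1 : matACC n θw r r = 1 - θw := by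
        simp only [matACC, Matrix.of_apply, Fin.ext_iff, Fin.val_mk]
        split_ifs <;> first | rfl | (exfalso; omega)
      rw [e1]; linarith
    · intro _
      have e1 : matACC n θw r r = 1 - θw := by
        simp only [matACC, Matrix.of_apply, Fin.ext_iff, Fin.val_mk]
        split_ifs <;> first | rfl | (exfalso; omega)
      have e2 : matACC n θw r ⟨(r : ℕ) + 1, hrn⟩ = θw := by
        simp only [matACC, Matrix.of_apply, Fin.ext_iff, Fin.val_mk]
        split_ifs <;> first | rfl | (exfalso; omega)
      rw [e1, e2]; linarith

lemma ACF_rowsum {s : ℕ} (hsn : s ≤ n) (hv0 : 0 ≤ θv) (hw0 : 0 ≤ θw) (hv1 : θv ≤ 1) (hw1 : θw ≤ 1)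
    (r : Fin n) : ∑ c, matACF n s θv θw r c ≤ 1 := by
  by_cases hb : (r : ℕ) < s
  · -- Δ block row
    by_cases hb2 : (r : ℕ) + 1 < s
    · have hrn : (r : ℕ) + 1 < n := by have := r.isLt; omega
      refine aux_sum_le_two _ r ⟨(r : ℕ) + 1, hrn⟩ ?_ ?_ ?_
      · intro c hc hc2
        have hc' : (c : ℕ) ≠ (r : ℕ) := fun he => hc (Fin.ext he)
        have hc2' : (c : ℕ) ≠ (r : ℕ) + 1 := fun he => hc2 (Fin.ext he)
        simp only [matACF, Matrix.of_apply, Fin.ext_iff, Fin.val_mk]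
        split_ifs <;> first | rfl | (exfalso; omega)
      · have e1 : matACF n s θv θw r r = 1 - θw := by
          simp only [matACF, Matrix.of_apply, Fin.ext_iff, Fin.val_mk]
          split_ifs <;> first | rfl | (exfalso; omega)
        rw [e1]; linarith
      · intro _
        have e1 : matACF n s θv θw r r = 1 - θw := by
          simp only [matACF, Matrix.of_apply, Fin.ext_iff, Fin.val_mk]
          split_ifs <;> first | rfl | (exfalso; omega)
        have e2 : matACF n s θv θw r ⟨(r : ℕ) + 1, hrn⟩ = θw := by
          simp only [matACF, Matrix.of_apply, Fin.ext_iff, Fin.val_mk]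
          split_ifs <;> first | rfl | (exfalso; omega)
        rw [e1, e2]; linarith
    · refine aux_sum_le_two _ r r ?_ ?_ (by simp)
      · intro c hc _
        have hc' : (c : ℕ) ≠ (r : ℕ) := fun he => hc (Fin.ext he)
        simp only [matACF, Matrix.of_apply, Fin.ext_iff, Fin.val_mk]
        split_ifs <;> first | rfl | (exfalso; omega)
      · have e1 : matACF n s θv θw r r = 1 - θw := by
          simp only [matACF, Matrix.of_apply, Fin.ext_iff, Fin.val_mk]
          split_ifs <;> first | rfl | (exfalso; omega)
        rw [e1]; linarith
  · -- Θ block row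
    by_cases hb2 : s ≤ (r : ℕ) - 1 ∧ 1 ≤ (r : ℕ)
    · have hrn : (r : ℕ) - 1 < n := by have := r.isLt; omega
      refine aux_sum_le_two _ r ⟨(r : ℕ) - 1, hrn⟩ ?_ ?_ ?_
      · intro c hc hc2
        have hc' : (c : ℕ) ≠ (r : ℕ) := fun he => hc (Fin.ext he)
        have hc2' : (c : ℕ) ≠ (r : ℕ) - 1 := fun he => hc2 (Fin.ext he)
        simp only [matACF, Matrix.of_apply, Fin.ext_iff, Fin.val_mk]
        split_ifs <;> first | rfl | (exfalso; omega)
      · have e1 : matACF n s θv θw r r = 1 - θv := by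
          simp only [matACF, Matrix.of_apply, Fin.ext_iff, Fin.val_mk]
          split_ifs <;> first | rfl | (exfalso; omega)
        rw [e1]; linarith
      · intro _
        have e1 : matACF n s θv θw r r = 1 - θv := by
          simp only [matACF, Matrix.of_apply, Fin.ext_iff, Fin.val_mk]
          split_ifs <;> first | rfl | (exfalso; omega)
        have e2 : matACF n s θv θw r ⟨(r : ℕ) - 1, hrn⟩ = θv := by
          simp only [matACF, Matrix.of_apply, Fin.ext_iff, Fin.val_mk]
          split_ifs <;> first | rfl | (exfalso; omega)
        rw [e1, e2]; linarith
    · refine aux_sum_le_two _ r r ?_ ?_ (by simp)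
      · intro c hc _
        have hc' : (c : ℕ) ≠ (r : ℕ) := fun he => hc (Fin.ext he)
        simp only [matACF, Matrix.of_apply, Fin.ext_iff, Fin.val_mk]
        split_ifs <;> first | rfl | (exfalso; omega)
      · have e1 : matACF n s θv θw r r = 1 - θv := by
          simp only [matACF, Matrix.of_apply, Fin.ext_iff, Fin.val_mk]
          split_ifs <;> first | rfl | (exfalso; omega)
        rw [e1]; linarith

end Facts
end S19

namespace S19
open Matrix Finset

section Step
variable {n : ℕ} {θv θw θ δ : ℝ}

/-- A_FF acting on the first (left-supported) row: support stays `[0, k₁)`. -/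
lemma step_AFF_u (hv0 : 0 < θv) (hv1 : θv < 1)
    (hθ0 : 0 ≤ θ) (hθv : θ ≤ θv) (hθv1 : θ ≤ 1 - θv)
    (k₁ : ℕ) (hk₁1 : 1 ≤ k₁)
    (u : Fin n → ℝ) (hu0 : ∀ c, 0 ≤ u c)
    (huz : ∀ c : Fin n, k₁ ≤ (c : ℕ) → u c = 0)
    (hul : ∀ c : Fin n, (c : ℕ) < k₁ → δ ≤ u c) :
    (∀ c : Fin n, k₁ ≤ (c : ℕ) → mulRow u (matAFF n θv) c = 0) ∧
    (∀ c : Fin n, (c : ℕ) < k₁ → θ * δ ≤ mulRow u (matAFF n θv) c) := by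
  have hA0 := AFF_nonneg (n := n) hv0.le hv1.le
  constructor
  · intro c hc
    apply mulRow_zero
    intro r
    by_cases hr : (r : ℕ) < k₁
    · right
      simp only [matAFF, Matrix.of_apply, Fin.ext_iff, Fin.val_mk]
      split_ifs <;> first | rfl | (exfalso; omega)
    · exact Or.inl (huz r (by omega))
  · intro c hc
    refine mulRow_lb θ δ hθ0 u _ hu0 hA0 c c (hul c hc) ?_
    simp only [matAFF, Matrix.of_apply, Fin.ext_iff, Fin.val_mk]
    split_ifs <;> first | linarith | (exfalso; omega)

/-- A_FF acting on the second (right-supported) row: support grows to `[n-(k₂+1), n)`. -/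
lemma step_AFF_v (hn : 3 ≤ n) (hv0 : 0 < θv) (hv1 : θv < 1)
    (hθ0 : 0 ≤ θ) (hθv : θ ≤ θv) (hθv1 : θ ≤ 1 - θv)
    (k₂ : ℕ) (hk₂1 : 1 ≤ k₂) (hk₂n : k₂ ≤ n - 2)
    (v : Fin n → ℝ) (hv0' : ∀ c, 0 ≤ v c)
    (hvz : ∀ c : Fin n, (c : ℕ) < n - k₂ → v c = 0)
    (hvl : ∀ c : Fin n, n - k₂ ≤ (c : ℕ) → δ ≤ v c) :
    (∀ c : Fin n, (c : ℕ) < n - (k₂ + 1) → mulRow v (matAFF n θv) c = 0) ∧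
    (∀ c : Fin n, n - (k₂ + 1) ≤ (c : ℕ) → θ * δ ≤ mulRow v (matAFF n θv) c) := by
  have hA0 := AFF_nonneg (n := n) hv0.le hv1.le
  constructor
  · intro c hc
    apply mulRow_zero
    intro r
    by_cases hr : (r : ℕ) < n - k₂
    · exact Or.inl (hvz r hr)
    · right
      simp only [matAFF, Matrix.of_apply, Fin.ext_iff, Fin.val_mk]
      split_ifs <;> first | rfl | (exfalso; omega)
  · intro c hc
    by_cases hce : (c : ℕ) < n - k₂
    · -- c = n - k₂ - 1 : the new column
      have hlt : (c : ℕ) + 1 < n := by omega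
      refine mulRow_lb θ δ hθ0 v _ hv0' hA0 c ⟨(c : ℕ) + 1, hlt⟩
        (hvl _ (show n - k₂ ≤ (c : ℕ) + 1 by omega)) ?_
      simp only [matAFF, Matrix.of_apply, Fin.ext_iff, Fin.val_mk]
      split_ifs <;> first | linarith | (exfalso; omega)
    · refine mulRow_lb θ δ hθ0 v _ hv0' hA0 c c (hvl c (by omega)) ?_
      simp only [matAFF, Matrix.of_apply, Fin.ext_iff, Fin.val_mk]
      split_ifs <;> first | linarith | (exfalso; omega)

/-- A_CC acting on the first row: support grows to `[0, k₁+1)`. -/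
lemma step_ACC_u (hw0 : 0 < θw) (hw1 : θw < 1)
    (hθ0 : 0 ≤ θ) (hθw : θ ≤ θw) (hθw1 : θ ≤ 1 - θw)
    (k₁ : ℕ) (hk₁1 : 1 ≤ k₁) (hk₁n : k₁ ≤ n - 2)
    (u : Fin n → ℝ) (hu0 : ∀ c, 0 ≤ u c)
    (huz : ∀ c : Fin n, k₁ ≤ (c : ℕ) → u c = 0)
    (hul : ∀ c : Fin n, (c : ℕ) < k₁ → δ ≤ u c) :
    (∀ c : Fin n, k₁ + 1 ≤ (c : ℕ) → mulRow u (matACC n θw) c = 0) ∧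
    (∀ c : Fin n, (c : ℕ) < k₁ + 1 → θ * δ ≤ mulRow u (matACC n θw) c) := by
  have hA0 := ACC_nonneg (n := n) hw0.le hw1.le
  constructor
  · intro c hc
    apply mulRow_zero
    intro r
    by_cases hr : (r : ℕ) < k₁
    · right
      simp only [matACC, Matrix.of_apply, Fin.ext_iff, Fin.val_mk]
      split_ifs <;> first | rfl | (exfalso; omega)
    · exact Or.inl (huz r (by omega))
  · intro c hc
    by_cases hce : (c : ℕ) < k₁
    · refine mulRow_lb θ δ hθ0 u _ hu0 hA0 c c (hul c hce) ?_
      simp only [matACC, Matrix.of_apply, Fin.ext_iff, Fin.val_mk]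
      split_ifs <;> first | linarith | (exfalso; omega)
    · -- c = k₁ : the new column
      have hck : (c : ℕ) = k₁ := by omega
      have hlt : k₁ - 1 < n := by omega
      refine mulRow_lb θ δ hθ0 u _ hu0 hA0 c ⟨k₁ - 1, hlt⟩
        (hul _ (show k₁ - 1 < k₁ by omega)) ?_
      have hnk : k₁ - 1 ≠ n - 1 := by omega
      simp only [matACC, Matrix.of_apply, Fin.ext_iff, Fin.val_mk]
      split_ifs <;> first | linarith | (exfalso; omega)

/-- A_CC acting on the second row: support stays `[n-k₂, n)`. -/
lemma step_ACC_v (hw0 : 0 < θw) (hw1 : θw < 1)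
    (hθ0 : 0 ≤ θ) (hθw : θ ≤ θw) (hθw1 : θ ≤ 1 - θw)
    (k₂ : ℕ) (hk₂1 : 1 ≤ k₂)
    (v : Fin n → ℝ) (hv0' : ∀ c, 0 ≤ v c)
    (hvz : ∀ c : Fin n, (c : ℕ) < n - k₂ → v c = 0)
    (hvl : ∀ c : Fin n, n - k₂ ≤ (c : ℕ) → δ ≤ v c) :
    (∀ c : Fin n, (c : ℕ) < n - k₂ → mulRow v (matACC n θw) c = 0) ∧
    (∀ c : Fin n, n - k₂ ≤ (c : ℕ) → θ * δ ≤ mulRow v (matACC n θw) c) := by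
  have hA0 := ACC_nonneg (n := n) hw0.le hw1.le
  constructor
  · intro c hc
    apply mulRow_zero
    intro r
    by_cases hr : (r : ℕ) < n - k₂
    · exact Or.inl (hvz r hr)
    · right
      have hrn := r.isLt
      simp only [matACC, Matrix.of_apply, Fin.ext_iff, Fin.val_mk]
      split_ifs <;> first | rfl | (exfalso; omega)
  · intro c hc
    refine mulRow_lb θ δ hθ0 v _ hv0' hA0 c c (hvl c hc) ?_
    simp only [matACC, Matrix.of_apply, Fin.ext_iff, Fin.val_mk]
    split_ifs <;> first | linarith | (exfalso; omega)

/-- A_CF with `k₁ < s`: first-row support grows to `[0, k₁+1)`. -/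
lemma step_ACF_u_grow {s : ℕ} (hv0 : 0 < θv) (hv1 : θv < 1) (hw0 : 0 < θw) (hw1 : θw < 1)
    (hθ0 : 0 ≤ θ) (hθv : θ ≤ θv) (hθv1 : θ ≤ 1 - θv) (hθw : θ ≤ θw) (hθw1 : θ ≤ 1 - θw)
    (k₁ : ℕ) (hk₁1 : 1 ≤ k₁) (hk₁n : k₁ ≤ n - 2) (hks : k₁ < s)
    (u : Fin n → ℝ) (hu0 : ∀ c, 0 ≤ u c)
    (huz : ∀ c : Fin n, k₁ ≤ (c : ℕ) → u c = 0)
    (hul : ∀ c : Fin n, (c : ℕ) < k₁ → δ ≤ u c) :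
    (∀ c : Fin n, k₁ + 1 ≤ (c : ℕ) → mulRow u (matACF n s θv θw) c = 0) ∧
    (∀ c : Fin n, (c : ℕ) < k₁ + 1 → θ * δ ≤ mulRow u (matACF n s θv θw) c) := by
  have hA0 := ACF_nonneg (n := n) (s := s) hv0.le hv1.le hw0.le hw1.le
  constructor
  · intro c hc
    apply mulRow_zero
    intro r
    by_cases hr : (r : ℕ) < k₁
    · right
      simp only [matACF, Matrix.of_apply, Fin.ext_iff, Fin.val_mk]
      split_ifs <;> first | rfl | (exfalso; omega)
    · exact Or.inl (huz r (by omega))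
  · intro c hc
    by_cases hce : (c : ℕ) < k₁
    · refine mulRow_lb θ δ hθ0 u _ hu0 hA0 c c (hul c hce) ?_
      simp only [matACF, Matrix.of_apply, Fin.ext_iff, Fin.val_mk]
      split_ifs <;> first | linarith | (exfalso; omega)
    · have hck : (c : ℕ) = k₁ := by omega
      have hlt : k₁ - 1 < n := by omega
      refine mulRow_lb θ δ hθ0 u _ hu0 hA0 c ⟨k₁ - 1, hlt⟩
        (hul _ (show k₁ - 1 < k₁ by omega)) ?_
      simp only [matACF, Matrix.of_apply, Fin.ext_iff, Fin.val_mk]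
      split_ifs <;> first | linarith | (exfalso; omega)

/-- A_CF with `s ≤ k₁`: first-row support stays `[0, k₁)`. -/
lemma step_ACF_u_stay {s : ℕ} (hv0 : 0 < θv) (hv1 : θv < 1) (hw0 : 0 < θw) (hw1 : θw < 1)
    (hθ0 : 0 ≤ θ) (hθv : θ ≤ θv) (hθv1 : θ ≤ 1 - θv) (hθw : θ ≤ θw) (hθw1 : θ ≤ 1 - θw)
    (k₁ : ℕ) (hk₁1 : 1 ≤ k₁) (hks : s ≤ k₁)
    (u : Fin n → ℝ) (hu0 : ∀ c, 0 ≤ u c)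
    (huz : ∀ c : Fin n, k₁ ≤ (c : ℕ) → u c = 0)
    (hul : ∀ c : Fin n, (c : ℕ) < k₁ → δ ≤ u c) :
    (∀ c : Fin n, k₁ ≤ (c : ℕ) → mulRow u (matACF n s θv θw) c = 0) ∧
    (∀ c : Fin n, (c : ℕ) < k₁ → θ * δ ≤ mulRow u (matACF n s θv θw) c) := by
  have hA0 := ACF_nonneg (n := n) (s := s) hv0.le hv1.le hw0.le hw1.le
  constructor
  · intro c hc
    apply mulRow_zero
    intro r
    by_cases hr : (r : ℕ) < k₁
    · right
      simp only [matACF, Matrix.of_apply, Fin.ext_iff, Fin.val_mk]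
      split_ifs <;> first | rfl | (exfalso; omega)
    · exact Or.inl (huz r (by omega))
  · intro c hc
    refine mulRow_lb θ δ hθ0 u _ hu0 hA0 c c (hul c hc) ?_
    simp only [matACF, Matrix.of_apply, Fin.ext_iff, Fin.val_mk]
    split_ifs <;> first | linarith | (exfalso; omega)

/-- A_CF with `s + k₂ < n`: second-row support grows to `[n-(k₂+1), n)`. -/
lemma step_ACF_v_grow {s : ℕ} (hv0 : 0 < θv) (hv1 : θv < 1) (hw0 : 0 < θw) (hw1 : θw < 1)
    (hθ0 : 0 ≤ θ) (hθv : θ ≤ θv) (hθv1 : θ ≤ 1 - θv) (hθw : θ ≤ θw) (hθw1 : θ ≤ 1 - θw)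
    (k₂ : ℕ) (hk₂1 : 1 ≤ k₂) (hks : s + k₂ < n)
    (v : Fin n → ℝ) (hv0' : ∀ c, 0 ≤ v c)
    (hvz : ∀ c : Fin n, (c : ℕ) < n - k₂ → v c = 0)
    (hvl : ∀ c : Fin n, n - k₂ ≤ (c : ℕ) → δ ≤ v c) :
    (∀ c : Fin n, (c : ℕ) < n - (k₂ + 1) → mulRow v (matACF n s θv θw) c = 0) ∧
    (∀ c : Fin n, n - (k₂ + 1) ≤ (c : ℕ) → θ * δ ≤ mulRow v (matACF n s θv θw) c) := by
  have hA0 := ACF_nonneg (n := n) (s := s) hv0.le hv1.le hw0.le hw1.le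
  constructor
  · intro c hc
    apply mulRow_zero
    intro r
    by_cases hr : (r : ℕ) < n - k₂
    · exact Or.inl (hvz r hr)
    · right
      simp only [matACF, Matrix.of_apply, Fin.ext_iff, Fin.val_mk]
      split_ifs <;> first | rfl | (exfalso; omega)
  · intro c hc
    by_cases hce : (c : ℕ) < n - k₂
    · have hlt : (c : ℕ) + 1 < n := by omega
      refine mulRow_lb θ δ hθ0 v _ hv0' hA0 c ⟨(c : ℕ) + 1, hlt⟩
        (hvl _ (show n - k₂ ≤ (c : ℕ) + 1 by omega)) ?_
      simp only [matACF, Matrix.of_apply, Fin.ext_iff, Fin.val_mk]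
      split_ifs <;> first | linarith | (exfalso; omega)
    · refine mulRow_lb θ δ hθ0 v _ hv0' hA0 c c (hvl c (by omega)) ?_
      simp only [matACF, Matrix.of_apply, Fin.ext_iff, Fin.val_mk]
      split_ifs <;> first | linarith | (exfalso; omega)

/-- A_CF with `n ≤ s + k₂`: second-row support stays `[n-k₂, n)`. -/
lemma step_ACF_v_stay {s : ℕ} (hv0 : 0 < θv) (hv1 : θv < 1) (hw0 : 0 < θw) (hw1 : θw < 1)
    (hθ0 : 0 ≤ θ) (hθv : θ ≤ θv) (hθv1 : θ ≤ 1 - θv) (hθw : θ ≤ θw) (hθw1 : θ ≤ 1 - θw)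
    (k₂ : ℕ) (hk₂1 : 1 ≤ k₂) (hks : n ≤ s + k₂)
    (v : Fin n → ℝ) (hv0' : ∀ c, 0 ≤ v c)
    (hvz : ∀ c : Fin n, (c : ℕ) < n - k₂ → v c = 0)
    (hvl : ∀ c : Fin n, n - k₂ ≤ (c : ℕ) → δ ≤ v c) :
    (∀ c : Fin n, (c : ℕ) < n - k₂ → mulRow v (matACF n s θv θw) c = 0) ∧
    (∀ c : Fin n, n - k₂ ≤ (c : ℕ) → θ * δ ≤ mulRow v (matACF n s θv θw) c) := by
  have hA0 := ACF_nonneg (n := n) (s := s) hv0.le hv1.le hw0.le hw1.le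
  constructor
  · intro c hc
    apply mulRow_zero
    intro r
    by_cases hr : (r : ℕ) < n - k₂
    · exact Or.inl (hvz r hr)
    · right
      simp only [matACF, Matrix.of_apply, Fin.ext_iff, Fin.val_mk]
      split_ifs <;> first | rfl | (exfalso; omega)
  · intro c hc
    refine mulRow_lb θ δ hθ0 v _ hv0' hA0 c c (hvl c hc) ?_
    simp only [matACF, Matrix.of_apply, Fin.ext_iff, Fin.val_mk]
    split_ifs <;> first | linarith | (exfalso; omega)

end Step
end S19

namespace S19
open Matrix Finset

lemma prodSeq_shift {n : ℕ} (M : ℕ → Matrix (Fin n) (Fin n) ℝ) :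
    ∀ b, prodSeq M (b + 1) = prodSeq (fun k => M (k + 1)) b * M 1 := by
  intro b
  induction b with
  | zero => simp [prodSeq]
  | succ b ih =>
      show M (b + 2) * prodSeq M (b + 1) = _
      rw [ih]
      show _ = (fun k => M (k + 1)) (b + 1) * prodSeq (fun k => M (k + 1)) b * M 1
      rw [Matrix.mul_assoc]

lemma main_ind (n : ℕ) (hn : 3 ≤ n) (θv θw θ : ℝ)
    (hv0 : 0 < θv) (hv1 : θv < 1) (hw0 : 0 < θw) (hw1 : θw < 1)
    (hθ0 : 0 ≤ θ) (hθv : θ ≤ θv) (hθv1 : θ ≤ 1 - θv) (hθw : θ ≤ θw) (hθw1 : θ ≤ 1 - θw) :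
    ∀ ι : ℕ, ι ≤ n - 2 → ∀ M : ℕ → Matrix (Fin n) (Fin n) ℝ,
      (∀ κ, 1 ≤ κ → κ ≤ ι → M κ ∈ setAO n θv θw) →
      ∃ k₁ k₂ : ℕ, 1 ≤ k₁ ∧ k₁ ≤ ι + 1 ∧ 1 ≤ k₂ ∧ k₂ ≤ ι + 1 ∧ ι + 2 ≤ k₁ + k₂ ∧
        (∀ c, 0 ≤ (matHb n * prodSeq M ι) 0 c) ∧
        (∑ c, (matHb n * prodSeq M ι) 0 c ≤ 1) ∧
        (∀ c : Fin n, k₁ ≤ (c : ℕ) → (matHb n * prodSeq M ι) 0 c = 0) ∧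
        (∀ c : Fin n, (c : ℕ) < k₁ → θ ^ ι ≤ (matHb n * prodSeq M ι) 0 c) ∧
        (∀ c, 0 ≤ (matHb n * prodSeq M ι) 1 c) ∧
        (∑ c, (matHb n * prodSeq M ι) 1 c ≤ 1) ∧
        (∀ c : Fin n, (c : ℕ) < n - k₂ → (matHb n * prodSeq M ι) 1 c = 0) ∧
        (∀ c : Fin n, n - k₂ ≤ (c : ℕ) → θ ^ ι ≤ (matHb n * prodSeq M ι) 1 c) := by
  intro ι
  induction ι with
  | zero =>
      intro _ M _
      have hP : matHb n * prodSeq M 0 = matHb n := by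
        show matHb n * 1 = matHb n
        rw [Matrix.mul_one]
      refine ⟨1, 1, le_rfl, by omega, le_rfl, by omega, by omega, ?_, ?_, ?_, ?_, ?_, ?_, ?_, ?_⟩ <;>
        rw [hP]
      · intro c
        simp only [matHb, Matrix.of_apply, Fin.val_mk, show ((0 : Fin 2) : ℕ) = 0 from rfl]
        split_ifs <;> norm_num
      · refine aux_sum_le_two _ ⟨0, by omega⟩ ⟨0, by omega⟩ ?_ ?_ (by simp)
        · intro c hc _
          have hc' : (c : ℕ) ≠ 0 := fun he => hc (Fin.ext he)
          simp only [matHb, Matrix.of_apply, Fin.val_mk, show ((0 : Fin 2) : ℕ) = 0 from rfl]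
          split_ifs <;> first | rfl | (exfalso; omega) | (exfalso; tauto)
        · have : matHb n 0 ⟨0, by omega⟩ = 1 := by
            simp only [matHb, Matrix.of_apply, Fin.val_mk, show ((0 : Fin 2) : ℕ) = 0 from rfl]
            split_ifs <;> first | rfl | (exfalso; omega) | (exfalso; tauto)
          rw [this]
      · intro c hc
        simp only [matHb, Matrix.of_apply, Fin.val_mk, show ((0 : Fin 2) : ℕ) = 0 from rfl]
        split_ifs <;> first | rfl | (exfalso; omega) | (exfalso; tauto)
      · intro c hc
        have hc0 : (c : ℕ) = 0 := by omega
        have : matHb n 0 c = 1 := by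
          simp only [matHb, Matrix.of_apply, Fin.val_mk, show ((0 : Fin 2) : ℕ) = 0 from rfl]
          split_ifs <;> first | rfl | (exfalso; omega) | (exfalso; tauto)
        rw [this, pow_zero]
      · intro c
        simp only [matHb, Matrix.of_apply, Fin.val_mk, show ((1 : Fin 2) : ℕ) = 1 from rfl]
        split_ifs <;> norm_num
      · refine aux_sum_le_two _ ⟨n - 1, by omega⟩ ⟨n - 1, by omega⟩ ?_ ?_ (by simp)
        · intro c hc _
          have hc' : (c : ℕ) ≠ n - 1 := fun he => hc (Fin.ext he)
          simp only [matHb, Matrix.of_apply, Fin.val_mk, show ((1 : Fin 2) : ℕ) = 1 from rfl]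
          split_ifs <;> first | rfl | (exfalso; omega) | (exfalso; tauto)
        · have : matHb n 1 ⟨n - 1, by omega⟩ = 1 := by
            simp only [matHb, Matrix.of_apply, Fin.val_mk, show ((1 : Fin 2) : ℕ) = 1 from rfl]
            split_ifs <;> first | rfl | (exfalso; omega) | (exfalso; tauto)
          rw [this]
      · intro c hc
        simp only [matHb, Matrix.of_apply, Fin.val_mk, show ((1 : Fin 2) : ℕ) = 1 from rfl]
        split_ifs <;> first | rfl | (exfalso; omega) | (exfalso; tauto)
      · intro c hc
        have hcn : (c : ℕ) = n - 1 := by have := c.isLt; omega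
        have : matHb n 1 c = 1 := by
          simp only [matHb, Matrix.of_apply, Fin.val_mk, show ((1 : Fin 2) : ℕ) = 1 from rfl]
          split_ifs <;> first | rfl | (exfalso; omega) | (exfalso; tauto)
        rw [this, pow_zero]
  | succ ι ih =>
      intro hιn M hM
      set M' : ℕ → Matrix (Fin n) (Fin n) ℝ := fun k => M (k + 1) with hM'def
      have hM' : ∀ κ, 1 ≤ κ → κ ≤ ι → M' κ ∈ setAO n θv θw := fun κ h1 h2 =>
        hM (κ + 1) (by omega) (by omega)
      obtain ⟨k₁, k₂, hk₁1, hk₁ι, hk₂1, hk₂ι, hksum, hu0, hus, huz, hul, hw0', hws, hwz, hwl⟩ :=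
        ih (by omega) M' hM'
      have hk₁n : k₁ ≤ n - 2 := by omega
      have hk₂n : k₂ ≤ n - 2 := by omega
      have hA : M 1 ∈ setAO n θv θw := hM 1 le_rfl (by omega)
      -- the new rows are `mulRow` of the old rows by `M 1`
      have hrow : ∀ (i : Fin 2) (c : Fin n),
          (matHb n * prodSeq M (ι + 1)) i c =
            mulRow ((matHb n * prodSeq M' ι) i) (M 1) c := by
        intro i c
        rw [prodSeq_shift M ι, ← Matrix.mul_assoc]
        rw [Matrix.mul_apply]
        rfl
      simp only [setAO, Set.mem_union, Set.mem_insert_iff, Set.mem_singleton_iff,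
        Set.mem_setOf_eq] at hA
      -- generic facts about M 1
      have hA0 : ∀ r c, 0 ≤ M 1 r c := by
        rcases hA with (h | h) | ⟨s, hs1, hs2, h⟩ <;> rw [h]
        · exact AFF_nonneg hv0.le hv1.le
        · exact ACC_nonneg hw0.le hw1.le
        · exact ACF_nonneg hv0.le hv1.le hw0.le hw1.le
      have hAs : ∀ r, ∑ c, M 1 r c ≤ 1 := by
        rcases hA with (h | h) | ⟨s, hs1, hs2, h⟩ <;> rw [h]
        · exact AFF_rowsum hv0.le
        · exact ACC_rowsum hw0.le
        · exact ACF_rowsum (by omega) hv0.le hw0.le hv1.le hw1.le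
      have hpow : θ ^ (ι + 1) = θ * θ ^ ι := by rw [pow_succ, mul_comm]
      -- shared conclusions
      have hnew0u : ∀ c, 0 ≤ (matHb n * prodSeq M (ι + 1)) 0 c := by
        intro c; rw [hrow]; exact mulRow_nonneg _ _ hu0 hA0 c
      have hnewsu : ∑ c, (matHb n * prodSeq M (ι + 1)) 0 c ≤ 1 := by
        calc ∑ c, (matHb n * prodSeq M (ι + 1)) 0 c
            = ∑ c, mulRow ((matHb n * prodSeq M' ι) 0) (M 1) c :=
              Finset.sum_congr rfl fun c _ => hrow 0 c
          _ ≤ 1 := mulRow_sum_le _ _ hu0 hus hAs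
      have hnew0v : ∀ c, 0 ≤ (matHb n * prodSeq M (ι + 1)) 1 c := by
        intro c; rw [hrow]; exact mulRow_nonneg _ _ hw0' hA0 c
      have hnewsv : ∑ c, (matHb n * prodSeq M (ι + 1)) 1 c ≤ 1 := by
        calc ∑ c, (matHb n * prodSeq M (ι + 1)) 1 c
            = ∑ c, mulRow ((matHb n * prodSeq M' ι) 1) (M 1) c :=
              Finset.sum_congr rfl fun c _ => hrow 1 c
          _ ≤ 1 := mulRow_sum_le _ _ hw0' hws hAs
      rcases hA with (h | h) | ⟨s, hs1, hs2, h⟩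
      · -- A_FF : k₁' = k₁, k₂' = k₂ + 1
        obtain ⟨hz1, hl1⟩ := step_AFF_u hv0 hv1 hθ0 hθv hθv1 k₁ hk₁1
          ((matHb n * prodSeq M' ι) 0) hu0 huz hul
        obtain ⟨hz2, hl2⟩ := step_AFF_v hn hv0 hv1 hθ0 hθv hθv1 k₂ hk₂1 hk₂n
          ((matHb n * prodSeq M' ι) 1) hw0' hwz hwl
        refine ⟨k₁, k₂ + 1, hk₁1, by omega, by omega, by omega, by omega,
          hnew0u, hnewsu, ?_, ?_, hnew0v, hnewsv, ?_, ?_⟩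
        · intro c hc; rw [hrow, h]; exact hz1 c hc
        · intro c hc; rw [hrow, h, hpow]; exact hl1 c hc
        · intro c hc; rw [hrow, h]; exact hz2 c hc
        · intro c hc; rw [hrow, h, hpow]; exact hl2 c hc
      · -- A_CC : k₁' = k₁ + 1, k₂' = k₂
        obtain ⟨hz1, hl1⟩ := step_ACC_u hw0 hw1 hθ0 hθw hθw1 k₁ hk₁1 hk₁n
          ((matHb n * prodSeq M' ι) 0) hu0 huz hul
        obtain ⟨hz2, hl2⟩ := step_ACC_v hw0 hw1 hθ0 hθw hθw1 k₂ hk₂1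
          ((matHb n * prodSeq M' ι) 1) hw0' hwz hwl
        refine ⟨k₁ + 1, k₂, by omega, by omega, hk₂1, by omega, by omega,
          hnew0u, hnewsu, ?_, ?_, hnew0v, hnewsv, ?_, ?_⟩
        · intro c hc; rw [hrow, h]; exact hz1 c hc
        · intro c hc; rw [hrow, h, hpow]; exact hl1 c hc
        · intro c hc; rw [hrow, h]; exact hz2 c hc
        · intro c hc; rw [hrow, h, hpow]; exact hl2 c hc
      · -- A_CF^s
        by_cases hgu : k₁ < s
        · obtain ⟨hz1, hl1⟩ := step_ACF_u_grow (s := s) hv0 hv1 hw0 hw1 hθ0 hθv hθv1 hθw hθw1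
            k₁ hk₁1 hk₁n hgu ((matHb n * prodSeq M' ι) 0) hu0 huz hul
          by_cases hgv : s + k₂ < n
          · obtain ⟨hz2, hl2⟩ := step_ACF_v_grow (s := s) hv0 hv1 hw0 hw1 hθ0 hθv hθv1 hθw hθw1
              k₂ hk₂1 hgv ((matHb n * prodSeq M' ι) 1) hw0' hwz hwl
            refine ⟨k₁ + 1, k₂ + 1, by omega, by omega, by omega, by omega, by omega,
              hnew0u, hnewsu, ?_, ?_, hnew0v, hnewsv, ?_, ?_⟩
            · intro c hc; rw [hrow, h]; exact hz1 c hc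
            · intro c hc; rw [hrow, h, hpow]; exact hl1 c hc
            · intro c hc; rw [hrow, h]; exact hz2 c hc
            · intro c hc; rw [hrow, h, hpow]; exact hl2 c hc
          · obtain ⟨hz2, hl2⟩ := step_ACF_v_stay (s := s) hv0 hv1 hw0 hw1 hθ0 hθv hθv1 hθw hθw1
              k₂ hk₂1 (by omega) ((matHb n * prodSeq M' ι) 1) hw0' hwz hwl
            refine ⟨k₁ + 1, k₂, by omega, by omega, hk₂1, by omega, by omega,
              hnew0u, hnewsu, ?_, ?_, hnew0v, hnewsv, ?_, ?_⟩
            · intro c hc; rw [hrow, h]; exact hz1 c hc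
            · intro c hc; rw [hrow, h, hpow]; exact hl1 c hc
            · intro c hc; rw [hrow, h]; exact hz2 c hc
            · intro c hc; rw [hrow, h, hpow]; exact hl2 c hc
        · obtain ⟨hz1, hl1⟩ := step_ACF_u_stay (s := s) hv0 hv1 hw0 hw1 hθ0 hθv hθv1 hθw hθw1
            k₁ hk₁1 (by omega) ((matHb n * prodSeq M' ι) 0) hu0 huz hul
          by_cases hgv : s + k₂ < n
          · obtain ⟨hz2, hl2⟩ := step_ACF_v_grow (s := s) hv0 hv1 hw0 hw1 hθ0 hθv hθv1 hθw hθw1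
              k₂ hk₂1 hgv ((matHb n * prodSeq M' ι) 1) hw0' hwz hwl
            refine ⟨k₁, k₂ + 1, hk₁1, by omega, by omega, by omega, by omega,
              hnew0u, hnewsu, ?_, ?_, hnew0v, hnewsv, ?_, ?_⟩
            · intro c hc; rw [hrow, h]; exact hz1 c hc
            · intro c hc; rw [hrow, h, hpow]; exact hl1 c hc
            · intro c hc; rw [hrow, h]; exact hz2 c hc
            · intro c hc; rw [hrow, h, hpow]; exact hl2 c hc
          · -- neither grows: then n ≤ k₁ + k₂, so the sum bound still holds
            obtain ⟨hz2, hl2⟩ := step_ACF_v_stay (s := s) hv0 hv1 hw0 hw1 hθ0 hθv hθv1 hθw hθw1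
              k₂ hk₂1 (by omega) ((matHb n * prodSeq M' ι) 1) hw0' hwz hwl
            refine ⟨k₁, k₂, hk₁1, by omega, hk₂1, by omega, by omega,
              hnew0u, hnewsu, ?_, ?_, hnew0v, hnewsv, ?_, ?_⟩
            · intro c hc; rw [hrow, h]; exact hz1 c hc
            · intro c hc; rw [hrow, h, hpow]; exact hl1 c hc
            · intro c hc; rw [hrow, h]; exact hz2 c hc
            · intro c hc; rw [hrow, h, hpow]; exact hl2 c hc

end S19


/-- structure of `H_b · M_ι ⋯ M_1` for products of observable-mode
matrices of length `1 ≤ ι ≤ n−2`: the first row is supported on an initial segment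
of at most `ι+1` columns with entries in `[θ̲^ι, 1]`, the second row on a final
segment of at most `ι+1` columns with entries in `[θ̲^ι, 1]`, and the two segment
lengths `ι₁, ι₂` satisfy `ι₁ + ι₂ ≥ ι + 2`. -/
theorem stmt19
    (n : ℕ) (hn : 3 ≤ n)
    (Δt Δx vm w : ℝ) (hΔt : 0 < Δt) (hΔx : 0 < Δx) (hvm : 0 < vm) (hw : 0 < w)
    (hv1 : vm * Δt / Δx < 1) (hw1 : w * Δt / Δx < 1)
    (ι : ℕ) (hι1 : 1 ≤ ι) (hι2 : ι ≤ n - 2)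
    (M : ℕ → Matrix (Fin n) (Fin n) ℝ)
    (hM : ∀ κ, 1 ≤ κ → κ ≤ ι → M κ ∈ setAO n (vm * Δt / Δx) (w * Δt / Δx)) :
    ∃ ι₁ ι₂ : ℕ, 1 ≤ ι₁ ∧ ι₁ ≤ ι + 1 ∧ 1 ≤ ι₂ ∧ ι₂ ≤ ι + 1 ∧ ι + 2 ≤ ι₁ + ι₂ ∧
      (∀ c : Fin n, ι₁ ≤ (c : ℕ) → (matHb n * prodSeq M ι) 0 c = 0) ∧
      (∀ c : Fin n, (c : ℕ) < ι₁ →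
        (min (min (vm * Δt / Δx) (1 - vm * Δt / Δx))
            (min (w * Δt / Δx) (1 - w * Δt / Δx))) ^ ι ≤
          (matHb n * prodSeq M ι) 0 c ∧ (matHb n * prodSeq M ι) 0 c ≤ 1) ∧
      (∀ c : Fin n, (c : ℕ) < n - ι₂ → (matHb n * prodSeq M ι) 1 c = 0) ∧
      (∀ c : Fin n, n - ι₂ ≤ (c : ℕ) →
        (min (min (vm * Δt / Δx) (1 - vm * Δt / Δx))
            (min (w * Δt / Δx) (1 - w * Δt / Δx))) ^ ι ≤
          (matHb n * prodSeq M ι) 1 c ∧ (matHb n * prodSeq M ι) 1 c ≤ 1) := by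
  set θv : ℝ := vm * Δt / Δx with hθvdef
  set θw : ℝ := w * Δt / Δx with hθwdef
  have hv0 : 0 < θv := div_pos (mul_pos hvm hΔt) hΔx
  have hw0 : 0 < θw := div_pos (mul_pos hw hΔt) hΔx
  set θ : ℝ := min (min θv (1 - θv)) (min θw (1 - θw)) with hθdef
  have hθ0 : 0 ≤ θ :=
    le_min (le_min hv0.le (by linarith)) (le_min hw0.le (by linarith))
  have hθv : θ ≤ θv := le_trans (min_le_left _ _) (min_le_left _ _)
  have hθv1 : θ ≤ 1 - θv := le_trans (min_le_left _ _) (min_le_right _ _)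
  have hθw : θ ≤ θw := le_trans (min_le_right _ _) (min_le_left _ _)
  have hθw1 : θ ≤ 1 - θw := le_trans (min_le_right _ _) (min_le_right _ _)
  obtain ⟨k₁, k₂, h1, h2, h3, h4, h5, hu0, hus, huz, hul, hw0', hws, hwz, hwl⟩ :=
    S19.main_ind n hn θv θw θ hv0 hv1 hw0 hw1 hθ0 hθv hθv1 hθw hθw1 ι hι2 M hM
  refine ⟨k₁, k₂, h1, h2, h3, h4, h5, huz, ?_, hwz, ?_⟩
  · intro c hc
    refine ⟨hul c hc, ?_⟩
    exact le_trans
      (Finset.single_le_sum (f := fun j => (matHb n * prodSeq M ι) 0 j)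
        (fun i _ => hu0 i) (Finset.mem_univ c)) hus
  · intro c hc
    refine ⟨hwl c hc, ?_⟩
    exact le_trans
      (Finset.single_le_sum (f := fun j => (matHb n * prodSeq M ι) 1 j)
        (fun i _ => hw0' i) (Finset.mem_univ c)) hws

end
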